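/- If L is a compartmental matrix, then any eigenvalue of L with zero real part is equal to zero. -/

import Mathlib

open Matrix

/-- If L is a compartmental matrix, then any eigenvalue of L with zero real part
is equal to zero. -/
theorem compartmental_eigenvalue_re_zero_eq_zero {d : ℕ} (L : Matrix (Fin d) (Fin d) ℝ)
    (hoff : ∀ i j, i ≠ j → 0 ≤ L i j)
    (hcol : ∀ j, ∑ i, L i j ≤ 0)
    (μ : ℂ) (v : Fin d → ℂ) (hv : v ≠ 0)
    (hev : (L.map (fun a => (a : ℂ))) *ᵥ v = μ • v)
    (hre : μ.re = 0) :
    μ = 0 := by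
  set M : Matrix (Fin d) (Fin d) ℂ := L.map (fun a => (a : ℂ)) with hM
  -- det (M - μ•1) = 0
  have hdet : (M - μ • 1).det = 0 := by
    rw [← Matrix.exists_mulVec_eq_zero_iff]
    refine ⟨v, hv, ?_⟩
    rw [Matrix.sub_mulVec, hev, Matrix.smul_mulVec, Matrix.one_mulVec, sub_self]
  have hdetT : ((Mᵀ - μ • 1)).det = 0 := by
    have : (Mᵀ - μ • 1) = (M - μ • 1)ᵀ := by
      rw [Matrix.transpose_sub, Matrix.transpose_smul, Matrix.transpose_one]
    rw [this, Matrix.det_transpose, hdet]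
  obtain ⟨w, hw, hww⟩ := (Matrix.exists_mulVec_eq_zero_iff).mpr hdetT
  have hevT : Mᵀ *ᵥ w = μ • w := by
    have := hww
    rw [Matrix.sub_mulVec, Matrix.smul_mulVec, Matrix.one_mulVec, sub_eq_zero] at this
    exact this
  have heig : Module.End.HasEigenvalue (Matrix.toLin' Mᵀ) μ := by
    refine Module.End.hasEigenvalue_of_hasEigenvector (⟨?_, hw⟩ : Module.End.HasEigenvector _ μ w)
    rw [Module.End.mem_eigenspace_iff, Matrix.toLin'_apply, hevT]
  obtain ⟨k, hk⟩ := eigenvalue_mem_ball heig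
  rw [mem_closedBall_iff_norm'] at hk
  have hTdiag : Mᵀ k k = (L k k : ℂ) := by simp [hM, Matrix.transpose_apply, Matrix.map_apply]
  have hsum : ∑ j ∈ Finset.univ.erase k, ‖Mᵀ k j‖ = ∑ j ∈ Finset.univ.erase k, L j k := by
    refine Finset.sum_congr rfl fun j hj => ?_
    have hjk : j ≠ k := Finset.ne_of_mem_erase hj
    simp only [hM, Matrix.transpose_apply, Matrix.map_apply, Complex.norm_real]
    exact abs_of_nonneg (hoff j k hjk)
  have hr : ∑ j ∈ Finset.univ.erase k, L j k ≤ -(L k k) := by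
    have := hcol k
    have : L k k + ∑ j ∈ Finset.univ.erase k, L j k ≤ 0 := by
      have := Finset.add_sum_erase Finset.univ (fun i => L i k) (Finset.mem_univ k)
      rw [this]
      exact hcol k
    linarith
  rw [hTdiag, hsum] at hk
  have hk' : ‖(L k k : ℂ) - μ‖ ≤ -(L k k) := le_trans hk hr
  -- squaring
  have h2 : ‖(L k k : ℂ) - μ‖ ^ 2 ≤ (L k k) ^ 2 := by
    have h0 : (0:ℝ) ≤ ‖(L k k : ℂ) - μ‖ := norm_nonneg _
    nlinarith
  have hnsq : ((L k k : ℂ) - μ).re ^ 2 + ((L k k : ℂ) - μ).im ^ 2 ≤ (L k k) ^ 2 := by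
    rw [← Complex.normSq_eq_norm_sq, Complex.normSq_apply] at h2
    nlinarith [h2]
  have hre' : ((L k k : ℂ) - μ).re = L k k := by simp [hre]
  have him : ((L k k : ℂ) - μ).im = -μ.im := by simp
  rw [hre', him] at hnsq
  have : μ.im = 0 := by nlinarith
  exact Complex.ext hre this
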